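/- Consider an N-player aggregative game (N ≥ 2) in which all strategy sets K_i ⊆ ℝ^n and each cost function has the form f_i(x_i, x_{-i}) = f̃_i(x_i, g_i(x̄)) where x̄ = Σ_{j=1}^N x_j, and suppose each cost function f_i is defined on all of ℝ^{nN}. If the game is not abnormal, i.e., no player i has f_i(x_i, x_{-i}) = C_i(x_{-i}) for some function C_i of x_{-i} alone, then the function y ↦ h_P(0, y) is not identically zero on ℝ^{nN}; that is, there exists y ∈ ℝ^{nN} with h_P(0, y) ≠ 0. -/
import Mathlib


noncomputable section

/-- The set of joint strategy profiles of a game with strategy sets `K i ⊆ ℝ^{n i}`. -/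
def jointK {N : ℕ} {n : Fin N → ℕ}
    (K : ∀ i, Set (EuclideanSpace ℝ (Fin (n i)))) :
    Set (∀ i, EuclideanSpace ℝ (Fin (n i))) :=
  {x | ∀ i, x i ∈ K i}

/-- `φ` is an exact potential function for the game with strategy sets `K` and costs `f`. -/
def IsPotential {N : ℕ} {n : Fin N → ℕ}
    (K : ∀ i, Set (EuclideanSpace ℝ (Fin (n i))))
    (f : Fin N → (∀ i, EuclideanSpace ℝ (Fin (n i))) → ℝ)
    (φ : (∀ i, EuclideanSpace ℝ (Fin (n i))) → ℝ) : Prop :=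
  ∀ i : Fin N, ∀ x ∈ jointK K, ∀ xi' ∈ K i,
    f i (Function.update x i xi') - f i x = φ (Function.update x i xi') - φ x

/-- The game is a potential game. -/
def IsPotentialGame {N : ℕ} {n : Fin N → ℕ}
    (K : ∀ i, Set (EuclideanSpace ℝ (Fin (n i))))
    (f : Fin N → (∀ i, EuclideanSpace ℝ (Fin (n i))) → ℝ) : Prop :=
  ∃ φ, IsPotential K f φ

/-- The point on the path from `z` to `z + y` whose first `m` blocks are `z j + y j`
and whose remaining blocks are `z j`. -/
def upTo {N : ℕ} {n : Fin N → ℕ}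
    (z y : ∀ i, EuclideanSpace ℝ (Fin (n i))) (m : ℕ) :
    ∀ i, EuclideanSpace ℝ (Fin (n i)) :=
  fun j => if (j : ℕ) < m then z j + y j else z j

/-- `hP f z y` : the sum of the players' incremental cost differences along the path
`z → (z₁+y₁, z₋₁) → (z₁+y₁, z₂+y₂, …) → ⋯ → z+y`. -/
def hP {N : ℕ} {n : Fin N → ℕ}
    (f : Fin N → (∀ i, EuclideanSpace ℝ (Fin (n i))) → ℝ)
    (z y : ∀ i, EuclideanSpace ℝ (Fin (n i))) : ℝ :=
  ∑ i : Fin N, (f i (upTo z y ((i : ℕ) + 1)) - f i (upTo z y (i : ℕ)))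

/-- In an aggregative game (`N ≥ 2`, common strategy dimension `n`,
`f i x = f̃ i (x i) (g i (∑ j, x j))`) whose costs are defined on all of `ℝ^{nN}`,
if the game is not abnormal (no player's cost is independent of its own action),
then `y ↦ h_P(0,y)` is not identically zero on `ℝ^{nN}`. -/
theorem stmt5 {N : ℕ} {nDim : ℕ} (hN : 2 ≤ N)
    (K : Fin N → Set (EuclideanSpace ℝ (Fin nDim)))
    (f : Fin N → ((Fin N → EuclideanSpace ℝ (Fin nDim))) → ℝ)
    (m : Fin N → ℕ)
    (g : ∀ i : Fin N, EuclideanSpace ℝ (Fin nDim) → EuclideanSpace ℝ (Fin (m i)))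
    (ft : ∀ i : Fin N, EuclideanSpace ℝ (Fin nDim) → EuclideanSpace ℝ (Fin (m i)) → ℝ)
    (hagg : ∀ (i : Fin N) (x : Fin N → EuclideanSpace ℝ (Fin nDim)),
      f i x = ft i (x i) (g i (∑ j, x j)))
    (hnab : ∀ i : Fin N,
      ¬ (∀ (x : Fin N → EuclideanSpace ℝ (Fin nDim)) (xi' : EuclideanSpace ℝ (Fin nDim)),
          f i (Function.update x i xi') = f i x)) :
    ∃ y : Fin N → EuclideanSpace ℝ (Fin nDim), hP (n := fun _ => nDim) f 0 y ≠ 0 := by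
  by_contra hcon
  push_neg at hcon
  -- hcon : ∀ y, hP f 0 y = 0
  have hN0 : 0 < N := by omega
  set i0 : Fin N := ⟨0, by omega⟩ with hi0
  set i1 : Fin N := ⟨1, by omega⟩ with hi1
  have h01 : i0 ≠ i1 := by simp [hi0, hi1, Fin.ext_iff]
  apply hnab i1
  intro x xi'
  set s : EuclideanSpace ℝ (Fin nDim) := ∑ j ∈ Finset.univ.erase i1, x j with hs
  set Q : EuclideanSpace ℝ (Fin nDim) → (Fin N → EuclideanSpace ℝ (Fin nDim)) :=
    fun b j => if j = i0 then s else if j = i1 then b else 0 with hQ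
  -- sum of Q b
  have hQsum : ∀ b, ∑ j, Q b j = s + b := by
    intro b
    rw [← Finset.sum_subset (Finset.subset_univ ({i0, i1} : Finset (Fin N)))]
    · rw [Finset.sum_pair h01]
      simp [hQ, h01, h01.symm]
    · intro j _ hj
      simp only [Finset.mem_insert, Finset.mem_singleton, not_or] at hj
      simp [hQ, hj.1, hj.2]
  have hQi1 : ∀ b, Q b i1 = b := by
    intro b; simp [hQ, h01.symm]
  -- upTo description
  have upTo_eq : ∀ b k, upTo (n := fun _ => nDim) 0 (Q b) k
      = fun j : Fin N => if (j : ℕ) < k then Q b j else 0 := by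
    intro b k
    funext j
    simp [upTo]
  have hQzero : ∀ b (j : Fin N), 2 ≤ (j : ℕ) → Q b j = 0 := by
    intro b j hj
    have h1 : j ≠ i0 := by simp [hi0, Fin.ext_iff]; omega
    have h2 : j ≠ i1 := by simp [hi1, Fin.ext_iff]; omega
    simp [hQ, h1, h2]
  have hup2 : ∀ b k, 2 ≤ k → upTo (n := fun _ => nDim) 0 (Q b) k = Q b := by
    intro b k hk
    rw [upTo_eq]
    funext j
    by_cases hc : (j : ℕ) < k
    · simp [hc]
    · simp only [hc, if_false]
      exact (hQzero b j (by omega)).symm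
  -- evaluate hP on Q b
  have hsum : ∀ b, hP (n := fun _ => nDim) f 0 (Q b) =
      (f i0 (upTo 0 (Q b) 1) - f i0 (upTo 0 (Q b) 0))
      + (f i1 (Q b) - f i1 (upTo 0 (Q b) 1)) := by
    intro b
    unfold hP
    rw [← Finset.sum_subset (Finset.subset_univ ({i0, i1} : Finset (Fin N)))]
    · rw [Finset.sum_pair h01]
      have c0 : ((i0 : Fin N) : ℕ) = 0 := rfl
      have c1 : ((i1 : Fin N) : ℕ) = 1 := rfl
      rw [c0, c1, hup2 b 2 (by omega)]
    · intro j _ hj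
      simp only [Finset.mem_insert, Finset.mem_singleton, not_or] at hj
      have hj2 : 2 ≤ (j : ℕ) := by
        rcases hj with ⟨h1, h2⟩
        have e1 : (j : ℕ) ≠ 0 := by
          intro h; exact h1 (by simp [hi0, Fin.ext_iff, h])
        have e2 : (j : ℕ) ≠ 1 := by
          intro h; exact h2 (by simp [hi1, Fin.ext_iff, h])
        omega
      rw [hup2 b _ (by omega), hup2 b _ (by omega), sub_self]
  -- the b-independent part cancels on subtraction
  have hkey : f i1 (Q (x i1)) = f i1 (Q xi') := by
    have e1 := hsum (x i1)
    have e2 := hsum xi'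
    rw [hcon (Q (x i1))] at e1
    rw [hcon (Q xi')] at e2
    have hfix : ∀ b, upTo (n := fun _ => nDim) 0 (Q b) 1
        = upTo (n := fun _ => nDim) 0 (Q (x i1)) 1 := by
      intro b
      rw [upTo_eq, upTo_eq]
      funext j
      by_cases hc : (j : ℕ) < 1
      · have : j = i0 := by simp [hi0, Fin.ext_iff]; omega
        simp [this, hQ]
      · simp [hc]
    have hfix0 : ∀ b, upTo (n := fun _ => nDim) 0 (Q b) 0
        = upTo (n := fun _ => nDim) 0 (Q (x i1)) 0 := by
      intro b
      rw [upTo_eq, upTo_eq]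
      funext j
      simp
    rw [hfix xi', hfix0 xi'] at e2
    linarith
  -- rewrite everything through the aggregative form
  have hsumx : ∑ j, x j = s + x i1 := by
    rw [hs, ← Finset.sum_erase_add Finset.univ x (Finset.mem_univ i1)]
  have hsumu : ∑ j, Function.update x i1 xi' j = s + xi' := by
    rw [Finset.sum_update_of_mem (Finset.mem_univ i1), add_comm, hs]
    simp [Finset.sdiff_singleton_eq_erase]
  rw [hagg i1 (Function.update x i1 xi'), hagg i1 x, Function.update_self, hsumu, hsumx]
  have k1 := hagg i1 (Q (x i1))
  have k2 := hagg i1 (Q xi')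
  rw [hQsum, hQi1] at k1
  rw [hQsum, hQi1] at k2
  rw [← k2, ← k1, hkey]
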